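/- Let F(x) := ∫₀ˣ (1−t⁶)^{−1/2} dt and H(x) := ∫₀ˣ (1−t²)^{−5/6} dt. For every s ∈ [0,1] with 2H(s) ≤ H(1), one has F( 2s(1−s²)^{1/6} / √(9−8s²) ) = (2/3) · H(s). (This is the identity sin_{2,6}(2x/3) = 2 f(x)(1−f(x)²)^{1/6}/√(9−8f(x)²) with f = sin_{6/5,2}.) -/

import Mathlib

open MeasureTheory intervalIntegral Set

/-- `F = F_{2,6}`, the incomplete integral `∫₀ˣ (1−t⁶)^{−1/2} dt`. -/
noncomputable def F26 (x : ℝ) : ℝ := ∫ t in (0:ℝ)..x, (1 - t ^ 6) ^ (-(1/2) : ℝ)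

/-- `H = F_{6/5,2}`, the incomplete integral `∫₀ˣ (1−t²)^{−5/6} dt`. -/
noncomputable def H652 (x : ℝ) : ℝ := ∫ t in (0:ℝ)..x, (1 - t ^ 2) ^ (-(5/6) : ℝ)


lemma integrable_aux (n : ℕ) (hn : n ≠ 0) (r : ℝ) (hr : -1 < r) (hr0 : r ≤ 0) :
    IntervalIntegrable (fun t : ℝ => (1 - t ^ n) ^ r) volume 0 1 := by
  have hg : IntervalIntegrable (fun t : ℝ => (1 - t) ^ r) volume 0 1 := by
    have := (intervalIntegrable_rpow' (a := 0) (b := 1) hr).comp_sub_left 1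
    simpa using this.symm
  refine hg.mono_fun ?_ ?_
  · have hcont : ContinuousOn (fun t : ℝ => (1 - t ^ n) ^ r) (Ioo 0 1) := by
      refine ContinuousOn.rpow_const ?_ ?_
      · exact (continuous_const.sub (continuous_pow n)).continuousOn
      · intro t ht
        left
        have : t ^ n < 1 := pow_lt_one₀ ht.1.le ht.2 hn
        nlinarith
    have h1 : AEStronglyMeasurable (fun t : ℝ => (1 - t ^ n) ^ r)
        (volume.restrict (Ioo (0:ℝ) 1)) := hcont.aestronglyMeasurable measurableSet_Ioo
    rw [uIoc_of_le (by norm_num : (0:ℝ) ≤ 1),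
      ← Measure.restrict_congr_set Ioo_ae_eq_Ioc]
    exact h1
  · rw [uIoc_of_le (by norm_num : (0:ℝ) ≤ 1),
      ← Measure.restrict_congr_set Ioo_ae_eq_Ioc]
    filter_upwards [ae_restrict_mem measurableSet_Ioo] with t ht
    obtain ⟨ht0, ht1⟩ := ht
    have h2 : 1 - t ≤ 1 - t ^ n := by
      have : t ^ n ≤ t := pow_le_of_le_one ht0.le ht1.le hn
      linarith
    have hpos : (0:ℝ) < 1 - t := by linarith
    simp only [Real.norm_eq_abs,
      abs_of_nonneg (Real.rpow_nonneg (by linarith : (0:ℝ) ≤ 1 - t ^ n) r),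
      abs_of_nonneg (Real.rpow_nonneg hpos.le r)]
    exact Real.rpow_le_rpow_of_nonpos hpos h2 hr0

lemma contOn_aux (n : ℕ) (hn : n ≠ 0) (r : ℝ) :
    ContinuousOn (fun t : ℝ => (1 - t ^ n) ^ r) (Ioo (-1) 1) := by
  refine ContinuousOn.rpow_const ?_ ?_
  · exact (continuous_const.sub (continuous_pow n)).continuousOn
  · intro t ht
    left
    have h1 : |t| < 1 := abs_lt.mpr ⟨ht.1, ht.2⟩
    have h2 : |t ^ n| < 1 := by
      rw [abs_pow]
      exact pow_lt_one₀ (abs_nonneg t) h1 hn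
    have := (abs_lt.mp h2).2
    intro hcontra
    linarith [sub_eq_zero.mp hcontra]

lemma hasDerivAt_primitive (n : ℕ) (hn : n ≠ 0) (r : ℝ) (hr : -1 < r) (hr0 : r ≤ 0)
    (y : ℝ) (hy0 : 0 ≤ y) (hy1 : y < 1) :
    HasDerivAt (fun x => ∫ t in (0:ℝ)..x, (1 - t ^ n) ^ r) ((1 - y ^ n) ^ r) y := by
  have hsub : Set.uIcc (0:ℝ) y ⊆ Set.uIcc (0:ℝ) 1 := by
    rw [uIcc_of_le hy0, uIcc_of_le (by norm_num : (0:ℝ) ≤ 1)]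
    exact Icc_subset_Icc le_rfl hy1.le
  have hint : IntervalIntegrable (fun t : ℝ => (1 - t ^ n) ^ r) volume 0 y :=
    (integrable_aux n hn r hr hr0).mono_set hsub
  have hmem : Ioo (-1:ℝ) 1 ∈ nhds y := Ioo_mem_nhds (by linarith) hy1
  refine integral_hasDerivAt_right hint ⟨Ioo (-1) 1, hmem,
    (contOn_aux n hn r).aestronglyMeasurable measurableSet_Ioo⟩ ?_
  exact (contOn_aux n hn r).continuousAt hmem

noncomputable def phi (s : ℝ) : ℝ :=
  2 * s * (1 - s ^ 2) ^ ((1:ℝ)/6) / Real.sqrt (9 - 8 * s ^ 2)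

lemma hasDerivAt_phi (s : ℝ) (h1 : s < 1) (hm1 : -1 < s) :
    HasDerivAt phi ((2 * (27 - 36*s^2 + 8*s^4) / 3) * (1 - s^2) ^ (-(5/6):ℝ)
      * Real.sqrt (9 - 8*s^2) / (9 - 8*s^2)^2) s := by
  have hu : (0:ℝ) < 1 - s ^ 2 := by nlinarith
  have hv : (0:ℝ) < 9 - 8 * s ^ 2 := by nlinarith
  set b := Real.sqrt (9 - 8 * s ^ 2) with hbdef
  have hb : 0 < b := Real.sqrt_pos.mpr hv
  have hb2 : b * b = 9 - 8 * s ^ 2 := Real.mul_self_sqrt hv.le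
  have hinner : HasDerivAt (fun s : ℝ => 1 - s ^ 2) (-(2*s)) s := by
    simpa using ((hasDerivAt_pow 2 s).const_sub 1)
  have hA : HasDerivAt (fun s : ℝ => (1 - s ^ 2) ^ ((1:ℝ)/6))
      ((1/6) * (1 - s^2) ^ ((1:ℝ)/6 - 1) * (-(2*s))) s := by
    have := hinner.rpow_const (p := (1:ℝ)/6) (Or.inl hu.ne')
    convert this using 1
    ring
  have hnum : HasDerivAt (fun s : ℝ => 2 * s * (1 - s ^ 2) ^ ((1:ℝ)/6))
      (2 * (1 - s^2) ^ ((1:ℝ)/6) + 2 * s * ((1/6) * (1 - s^2) ^ ((1:ℝ)/6 - 1) * (-(2*s)))) s := by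
    have := ((hasDerivAt_id s).const_mul 2).mul hA
    refine this.congr_deriv ?_
    simp only [id_eq]
    ring
  have hvin : HasDerivAt (fun s : ℝ => 9 - 8 * s ^ 2) (-(16*s)) s := by
    have := ((hasDerivAt_pow 2 s).const_mul 8).const_sub 9
    refine this.congr_deriv ?_
    push_cast; ring
  have hden : HasDerivAt (fun s : ℝ => Real.sqrt (9 - 8 * s ^ 2)) ((-(16*s)) / (2 * b)) s :=
    hvin.sqrt hv.ne'
  have hdiv := hnum.div hden hb.ne'
  refine hdiv.congr_deriv ?_
  have e1 : (1 - s^2) ^ ((1:ℝ)/6 - 1) = (1 - s^2) ^ (-(5/6):ℝ) := by norm_num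
  have e2 : (1 - s^2) ^ ((1:ℝ)/6) = (1 - s^2) * (1 - s^2) ^ (-(5/6):ℝ) := by
    rw [← Real.rpow_one_add' hu.le (by norm_num)]
    norm_num
  rw [e1, e2, ← hbdef]
  set a := (1 - s^2) ^ (-(5/6):ℝ) with hadef
  have hbne : b ≠ 0 := hb.ne'
  field_simp
  rw [eq_div_iff (pow_pos (by linarith) 2).ne']
  linear_combination (6*a*(9-8*s^2)^2*(6-8*s^2) - 12*a*(27 - 36*s^2 + 8*s^4)*(b^2 + 9 - 8*s^2)) * hb2
lemma phi_nonneg (s : ℝ) (h0 : 0 ≤ s) (h1 : s ≤ 1) : 0 ≤ phi s := by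
  unfold phi
  have : (0:ℝ) ≤ 1 - s^2 := by nlinarith
  positivity

lemma phi_pow6 (s : ℝ) (h0 : 0 ≤ s) (h1 : s ≤ 1) :
    (phi s) ^ 6 = 64 * s^6 * (1 - s^2) / (9 - 8*s^2)^3 := by
  have hu : (0:ℝ) ≤ 1 - s ^ 2 := by nlinarith
  have hv : (0:ℝ) < 9 - 8 * s ^ 2 := by nlinarith
  have hb2 : Real.sqrt (9 - 8*s^2) * Real.sqrt (9 - 8*s^2) = 9 - 8 * s ^ 2 :=
    Real.mul_self_sqrt hv.le
  have hbne : Real.sqrt (9 - 8*s^2) ≠ 0 := by positivity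
  have hA6 : ((1 - s^2) ^ ((1:ℝ)/6)) ^ (6:ℕ) = 1 - s^2 := by
    rw [← Real.rpow_natCast ((1 - s^2) ^ ((1:ℝ)/6)) 6, ← Real.rpow_mul hu]
    norm_num
  unfold phi
  rw [div_pow]
  rw [mul_pow, mul_pow, hA6]
  rw [div_eq_div_iff (by positivity) (by positivity)]
  have : Real.sqrt (9 - 8*s^2) ^ 6 = (9-8*s^2)^3 := by
    calc Real.sqrt (9 - 8*s^2) ^ 6 = (Real.sqrt (9 - 8*s^2) * Real.sqrt (9 - 8*s^2))^3 := by ring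
    _ = (9-8*s^2)^3 := by rw [hb2]
  rw [this]
  ring

lemma one_sub_phi_pow6 (s : ℝ) (h0 : 0 ≤ s) (h1 : s ≤ 1) :
    1 - (phi s) ^ 6 = (27 - 36*s^2 + 8*s^4)^2 / (9 - 8*s^2)^3 := by
  have hv : (0:ℝ) < 9 - 8 * s ^ 2 := by nlinarith
  rw [phi_pow6 s h0 h1]
  rw [eq_div_iff (by positivity), sub_mul, div_mul_cancel₀ _ (by positivity)]
  ring

lemma phi_lt_one (s : ℝ) (h0 : 0 ≤ s) (h1 : s ≤ 1) (hQ : 0 < 27 - 36*s^2 + 8*s^4) :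
    phi s < 1 := by
  have hv : (0:ℝ) < 9 - 8 * s ^ 2 := by nlinarith
  have h6 : (phi s) ^ 6 < 1 := by
    have := one_sub_phi_pow6 s h0 h1
    have hpos : 0 < (27 - 36*s^2 + 8*s^4)^2 / (9 - 8*s^2)^3 := by positivity
    linarith
  by_contra hc
  push_neg at hc
  have : (1:ℝ) ≤ (phi s) ^ 6 := one_le_pow₀ hc
  linarith

lemma phi_le_one (s : ℝ) (h0 : 0 ≤ s) (h1 : s ≤ 1) : phi s ≤ 1 := by
  have hv : (0:ℝ) < 9 - 8 * s ^ 2 := by nlinarith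
  have h6 : (phi s) ^ 6 ≤ 1 := by
    have := one_sub_phi_pow6 s h0 h1
    have hpos : 0 ≤ (27 - 36*s^2 + 8*s^4)^2 / (9 - 8*s^2)^3 := by positivity
    linarith
  by_contra hc
  push_neg at hc
  have : (1:ℝ) < (phi s) ^ 6 := one_lt_pow₀ hc (by norm_num)
  linarith

lemma rpow_neg_half_eq (x : ℝ) (hx : 0 ≤ x) : x ^ (-(1/2):ℝ) = (Real.sqrt x)⁻¹ := by
  rw [Real.rpow_neg hx, ← Real.sqrt_eq_rpow]

lemma hasDerivAt_F26 (y : ℝ) (hy0 : 0 ≤ y) (hy1 : y < 1) :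
    HasDerivAt F26 ((1 - y ^ 6) ^ (-(1/2):ℝ)) y :=
  hasDerivAt_primitive 6 (by norm_num) (-(1/2)) (by norm_num) (by norm_num) y hy0 hy1

lemma hasDerivAt_H652 (y : ℝ) (hy0 : 0 ≤ y) (hy1 : y < 1) :
    HasDerivAt H652 ((1 - y ^ 2) ^ (-(5/6):ℝ)) y :=
  hasDerivAt_primitive 2 (by norm_num) (-(5/6)) (by norm_num) (by norm_num) y hy0 hy1

lemma key_deriv (s : ℝ) (h0 : 0 ≤ s) (h1 : s < 1) (hQ : 0 < 27 - 36*s^2 + 8*s^4) :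
    HasDerivAt (fun x => F26 (phi x)) ((2/3) * (1 - s^2) ^ (-(5/6):ℝ)) s := by
  have hu : (0:ℝ) < 1 - s ^ 2 := by nlinarith
  have hv : (0:ℝ) < 9 - 8 * s ^ 2 := by nlinarith
  have hb : 0 < Real.sqrt (9 - 8*s^2) := Real.sqrt_pos.mpr hv
  have hb2 : Real.sqrt (9 - 8*s^2) * Real.sqrt (9 - 8*s^2) = 9 - 8 * s ^ 2 :=
    Real.mul_self_sqrt hv.le
  have hphi := hasDerivAt_phi s h1 (by linarith)
  have hF := hasDerivAt_F26 (phi s) (phi_nonneg s h0 h1.le) (phi_lt_one s h0 h1.le hQ)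
  have hcomp := hF.comp s hphi
  have hval : (1 - (phi s) ^ 6) ^ (-(1/2):ℝ)
      = (9 - 8*s^2) * Real.sqrt (9 - 8*s^2) / (27 - 36*s^2 + 8*s^4) := by
    rw [one_sub_phi_pow6 s h0 h1.le]
    rw [rpow_neg_half_eq _ (by positivity)]
    have hsq : (27 - 36*s^2 + 8*s^4)^2 / (9 - 8*s^2)^3
        = ((27 - 36*s^2 + 8*s^4) / ((9 - 8*s^2) * Real.sqrt (9 - 8*s^2)))^2 := by
      rw [div_pow]
      congr 1
      rw [mul_pow]
      nlinarith [hb2]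
    rw [hsq, Real.sqrt_sq (by positivity)]
    rw [inv_div]
  refine hcomp.congr_deriv ?_
  rw [hval]
  have hQne : (27 - 36*s^2 + 8*s^4) ≠ 0 := hQ.ne'
  have hbne : Real.sqrt (9 - 8*s^2) ≠ 0 := hb.ne'
  set a := (1 - s^2) ^ (-(5/6):ℝ) with hadef
  set b := Real.sqrt (9 - 8*s^2) with hbdef
  field_simp
  rw [div_eq_iff (by contrapose! hQne; linarith)]
  linear_combination (27 - 36*s^2 + 8*s^4) * a * hb2

lemma H652_zero : H652 0 = 0 := by simp [H652]

lemma phi_zero : phi 0 = 0 := by simp [phi]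

lemma F26_zero : F26 0 = 0 := by simp [F26]

lemma key1 (t : ℝ) (h0 : 0 ≤ t) (h1 : t < 1) (hQ : 0 < 27 - 36*t^2 + 8*t^4) :
    F26 (phi t) = 2/3 * H652 t := by
  have hQ' : ∀ x ∈ Icc 0 t, 0 < 27 - 36*x^2 + 8*x^4 := by
    intro x hx
    have hx2 : x^2 ≤ t^2 := pow_le_pow_left₀ hx.1 hx.2 2
    have ht2 : t^2 ≤ 1 := by nlinarith
    have e : 27 - 36*x^2 + 8*x^4 = (27 - 36*t^2 + 8*t^4) + (t^2 - x^2)*(36 - 8*(t^2 + x^2)) := by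
      ring
    nlinarith [mul_nonneg (sub_nonneg.2 hx2) (by nlinarith : (0:ℝ) ≤ 36 - 8*(t^2 + x^2))]
  have derivf : ∀ x ∈ Ico 0 t, HasDerivWithinAt (fun x => F26 (phi x))
      ((fun x => (2/3) * (1 - x^2) ^ (-(5/6):ℝ)) x) (Ici x) x := by
    intro x hx
    exact (key_deriv x hx.1 (lt_of_le_of_lt (le_of_lt hx.2) h1)
      (hQ' x ⟨hx.1, hx.2.le⟩)).hasDerivWithinAt
  have derivg : ∀ x ∈ Ico 0 t, HasDerivWithinAt (fun x => 2/3 * H652 x)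
      ((fun x => (2/3) * (1 - x^2) ^ (-(5/6):ℝ)) x) (Ici x) x := by
    intro x hx
    exact ((hasDerivAt_H652 x hx.1 (lt_of_le_of_lt (le_of_lt hx.2) h1)).const_mul
      (2/3 : ℝ)).hasDerivWithinAt
  have fcont : ContinuousOn (fun x => F26 (phi x)) (Icc 0 t) := by
    intro x hx
    exact (key_deriv x hx.1 (lt_of_le_of_lt hx.2 h1) (hQ' x hx)).continuousAt.continuousWithinAt
  have gcont : ContinuousOn (fun x => 2/3 * H652 x) (Icc 0 t) := by
    intro x hx
    exact ((hasDerivAt_H652 x hx.1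
      (lt_of_le_of_lt hx.2 h1)).const_mul (2/3:ℝ)).continuousAt.continuousWithinAt
  have := eq_of_has_deriv_right_eq derivf derivg fcont gcont
    (by rw [phi_zero, F26_zero, H652_zero]; ring) t (by constructor <;> [exact h0; rfl])
  simpa using this

noncomputable def creal : ℝ := Real.sqrt ((9 - 3*Real.sqrt 3)/4)

lemma sqrt3_sq : Real.sqrt 3 ^ 2 = 3 := Real.sq_sqrt (by norm_num)

lemma sqrt3_lt_2 : Real.sqrt 3 < 2 := by
  nlinarith [sqrt3_sq, Real.sqrt_nonneg 3]

lemma sqrt3_gt : (5/3:ℝ) < Real.sqrt 3 := by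
  nlinarith [sqrt3_sq, Real.sqrt_nonneg 3]

lemma creal_sq : creal ^ 2 = (9 - 3*Real.sqrt 3)/4 :=
  Real.sq_sqrt (by nlinarith [sqrt3_lt_2, Real.sqrt_nonneg 3])

lemma creal_pos : 0 < creal :=
  Real.sqrt_pos.mpr (by nlinarith [sqrt3_lt_2, Real.sqrt_nonneg 3])

lemma creal_lt_one : creal < 1 := by
  nlinarith [creal_sq, creal_pos, sqrt3_gt]

lemma Q_creal : 27 - 36*creal^2 + 8*creal^4 = 0 := by
  have h4 : creal^4 = (creal^2)^2 := by ring
  rw [h4, creal_sq]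
  nlinarith [sqrt3_sq]

lemma Q_pos (t : ℝ) (h0 : 0 ≤ t) (ht : t < creal) : 0 < 27 - 36*t^2 + 8*t^4 := by
  have ht2 : t^2 < creal^2 := by nlinarith [creal_pos]
  have hc1 : creal^2 < 1 := by nlinarith [creal_lt_one, creal_pos]
  have e : 27 - 36*t^2 + 8*t^4
      = (27 - 36*creal^2 + 8*creal^4) + (creal^2 - t^2)*(36 - 8*(creal^2 + t^2)) := by
    ring
  rw [e, Q_creal]
  have h1 : 0 < creal^2 - t^2 := by linarith
  have h2 : 0 < 36 - 8*(creal^2 + t^2) := by nlinarith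
  nlinarith

lemma phi_creal : phi creal = 1 := by
  have h6 : phi creal ^ 6 = 1 := by
    have := one_sub_phi_pow6 creal creal_pos.le creal_lt_one.le
    rw [Q_creal] at this
    simp at this
    linarith
  have hnn := phi_nonneg creal creal_pos.le creal_lt_one.le
  rcases lt_trichotomy (phi creal) 1 with hlt | heq | hgt
  · exfalso
    have : phi creal ^ 6 < 1 := pow_lt_one₀ hnn hlt (by norm_num)
    linarith
  · exact heq
  · exfalso
    have : (1:ℝ) < phi creal ^ 6 := one_lt_pow₀ hgt (by norm_num)
    linarith

lemma contOn_F26 : ContinuousOn F26 (Icc 0 1) := by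
  have h := continuousOn_primitive_interval'
    (integrable_aux 6 (by norm_num) (-(1/2)) (by norm_num) (by norm_num)) (a := 0)
    (by simp [Set.left_mem_uIcc])
  rw [uIcc_of_le (by norm_num : (0:ℝ) ≤ 1)] at h
  exact h

lemma contOn_H652 : ContinuousOn H652 (Icc 0 1) := by
  have h := continuousOn_primitive_interval'
    (integrable_aux 2 (by norm_num) (-(5/6)) (by norm_num) (by norm_num)) (a := 0)
    (by simp [Set.left_mem_uIcc])
  rw [uIcc_of_le (by norm_num : (0:ℝ) ≤ 1)] at h
  exact h

lemma contOn_phi : ContinuousOn phi (Icc 0 1) := by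
  unfold phi
  apply ContinuousOn.div
  · apply ContinuousOn.mul
    · exact (continuous_const.mul continuous_id).continuousOn
    · apply ContinuousOn.rpow_const
      · exact (continuous_const.sub (continuous_pow 2)).continuousOn
      · intro x _
        right; norm_num
  · exact (Real.continuous_sqrt.comp (continuous_const.sub
      (continuous_const.mul (continuous_pow 2)))).continuousOn
  · intro x hx
    have : (0:ℝ) < 9 - 8*x^2 := by nlinarith [hx.1, hx.2]
    positivity

lemma keyc : F26 1 = 2/3 * H652 creal := by
  have hc0 := creal_pos
  have hc1 := creal_lt_one
  have hfc : ContinuousWithinAt (fun x => F26 (phi x)) (Icc 0 creal) creal := by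
    apply (contOn_F26.comp (contOn_phi.mono (Icc_subset_Icc le_rfl hc1.le)) ?_).continuousWithinAt
    · exact ⟨hc0.le, le_rfl⟩
    · intro x hx
      exact ⟨phi_nonneg x hx.1 (hx.2.trans hc1.le),
        phi_le_one x hx.1 (hx.2.trans hc1.le)⟩
  have hgc : ContinuousWithinAt (fun x => 2/3 * H652 x) (Icc 0 creal) creal := by
    apply (continuousOn_const.mul (contOn_H652.mono (Icc_subset_Icc le_rfl hc1.le))).continuousWithinAt
    exact ⟨hc0.le, le_rfl⟩
  have hne : (nhdsWithin creal (Ico 0 creal)).NeBot := by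
    rw [← mem_closure_iff_nhdsWithin_neBot, closure_Ico hc0.ne]
    exact ⟨hc0.le, le_rfl⟩
  have hf' : Filter.Tendsto (fun x => F26 (phi x)) (nhdsWithin creal (Ico 0 creal))
      (nhds (F26 (phi creal))) :=
    hfc.tendsto.mono_left (nhdsWithin_mono creal Ico_subset_Icc_self)
  have hg' : Filter.Tendsto (fun x => 2/3 * H652 x) (nhdsWithin creal (Ico 0 creal))
      (nhds (2/3 * H652 creal)) :=
    hgc.tendsto.mono_left (nhdsWithin_mono creal Ico_subset_Icc_self)
  have heq : ∀ x ∈ Ico 0 creal, F26 (phi x) = 2/3 * H652 x := by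
    intro x hx
    exact key1 x hx.1 (hx.2.trans hc1) (Q_pos x hx.1 hx.2)
  have := tendsto_nhds_unique (hf'.congr' ?_) hg'
  · rw [← phi_creal]; exact this
  · filter_upwards [self_mem_nhdsWithin] with x hx using heq x hx

noncomputable def psi (x : ℝ) : ℝ :=
  H652 (Real.sqrt (1 - x^2)) + 3 * F26 (x ^ ((1:ℝ)/3))

lemma hasDerivAt_psi (x : ℝ) (h0 : 0 < x) (h1 : x < 1) : HasDerivAt psi 0 x := by
  have hu : (0:ℝ) < 1 - x^2 := by nlinarith
  have hq : Real.sqrt (1 - x^2) < 1 := by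
    have := Real.sqrt_lt_sqrt (by linarith : (0:ℝ) ≤ 1 - x^2) (by nlinarith : 1 - x^2 < 1)
    rwa [Real.sqrt_one] at this
  have hq0 : 0 ≤ Real.sqrt (1 - x^2) := Real.sqrt_nonneg _
  have hy1 : x ^ ((1:ℝ)/3) < 1 := Real.rpow_lt_one h0.le h1 (by norm_num)
  have hy0 : 0 ≤ x ^ ((1:ℝ)/3) := Real.rpow_nonneg h0.le _
  -- derivative of first term
  have hinner : HasDerivAt (fun x : ℝ => 1 - x ^ 2) (-(2*x)) x := by
    simpa using ((hasDerivAt_pow 2 x).const_sub 1)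
  have hsq : HasDerivAt (fun x : ℝ => Real.sqrt (1 - x^2)) ((-(2*x)) / (2 * Real.sqrt (1 - x^2))) x :=
    hinner.sqrt hu.ne'
  have hH := hasDerivAt_H652 (Real.sqrt (1 - x^2)) hq0 hq
  have hterm1 := hH.comp x hsq
  -- derivative of second term
  have hrt : HasDerivAt (fun x : ℝ => x ^ ((1:ℝ)/3)) ((1/3) * x ^ ((1:ℝ)/3 - 1)) x :=
    Real.hasDerivAt_rpow_const (Or.inl h0.ne')
  have hF := hasDerivAt_F26 (x ^ ((1:ℝ)/3)) hy0 hy1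
  have hterm2 := (hF.comp x hrt).const_mul (3:ℝ)
  have hsum := hterm1.add hterm2
  refine hsum.congr_deriv ?_
  -- algebra: the sum is zero
  have e1 : Real.sqrt (1 - x^2) ^ 2 = 1 - x^2 := Real.sq_sqrt hu.le
  have e2 : (x ^ ((1:ℝ)/3)) ^ 6 = x ^ 2 := by
    rw [← Real.rpow_natCast (x ^ ((1:ℝ)/3)) 6, ← Real.rpow_mul h0.le,
      show ((1:ℝ)/3 * (6:ℕ)) = ((2:ℕ):ℝ) by norm_num, Real.rpow_natCast]
  rw [e1, e2, show (1:ℝ) - (1 - x^2) = x^2 by ring]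
  have hsne : Real.sqrt (1 - x^2) ≠ 0 := by positivity
  have e3 : ((x:ℝ)^2) ^ (-(5/6):ℝ) = x ^ (-(5/3):ℝ) := by
    rw [← Real.rpow_natCast x 2, ← Real.rpow_mul h0.le]
    norm_num
  have e4 : x ^ ((1:ℝ)/3 - 1) = x ^ (-(2/3):ℝ) := by norm_num
  have e5 : x ^ (-(5/3):ℝ) * x = x ^ (-(2/3):ℝ) := by
    nth_rewrite 2 [← Real.rpow_one x]
    rw [← Real.rpow_add h0]
    norm_num
  have e6 : ((1:ℝ) - x^2) ^ (-(1/2):ℝ) = (Real.sqrt (1 - x^2))⁻¹ :=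
    rpow_neg_half_eq _ hu.le
  rw [e3, e4, e6]
  rw [show x ^ (-(5/3):ℝ) * (-(2*x) / (2*Real.sqrt (1-x^2)))
      = -((x ^ (-(5/3):ℝ) * x) / Real.sqrt (1-x^2)) by field_simp, e5]
  field_simp
  ring


lemma psi_constant (a b : ℝ) (ha : 0 < a) (hab : a ≤ b) (hb : b < 1) : psi b = psi a := by
  have hcont : ContinuousOn psi (Icc a b) := by
    intro x hx
    exact (hasDerivAt_psi x (lt_of_lt_of_le ha hx.1)
      (lt_of_le_of_lt hx.2 hb)).continuousAt.continuousWithinAt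
  have hderiv : ∀ x ∈ Ico a b, HasDerivWithinAt psi 0 (Ici x) x := by
    intro x hx
    exact (hasDerivAt_psi x (lt_of_lt_of_le ha hx.1)
      (lt_of_lt_of_le hx.2 hb.le)).hasDerivWithinAt
  exact constant_of_has_deriv_right_zero hcont hderiv b ⟨hab, le_rfl⟩

lemma psi_const_on : ∀ x ∈ Ioo (0:ℝ) 1, psi x = psi (1/2) := by
  intro x hx
  rcases le_or_gt x (1/2) with h | h
  · exact (psi_constant x (1/2) hx.1 h (by norm_num)).symm
  · exact psi_constant (1/2) x (by norm_num) h.le hx.2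

lemma contOn_psi : ContinuousOn psi (Icc 0 1) := by
  unfold psi
  apply ContinuousOn.add
  · apply contOn_H652.comp
    · exact (Real.continuous_sqrt.comp (continuous_const.sub (continuous_pow 2))).continuousOn
    · intro x hx
      constructor
      · exact Real.sqrt_nonneg _
      · have := Real.sqrt_le_sqrt (by nlinarith [hx.1, hx.2] : 1 - x^2 ≤ (1:ℝ))
        rwa [Real.sqrt_one] at this
  · apply ContinuousOn.mul continuousOn_const
    apply contOn_F26.comp
    · apply ContinuousOn.rpow_const continuousOn_id
      intro x _
      right; norm_num
    · intro x hx
      exact ⟨Real.rpow_nonneg hx.1 _, Real.rpow_le_one hx.1 hx.2 (by norm_num)⟩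

lemma psi_zero : psi 0 = H652 1 := by
  unfold psi
  rw [Real.zero_rpow (by norm_num : ((1:ℝ)/3) ≠ 0)]
  norm_num [F26_zero]

lemma psi_one : psi 1 = 3 * F26 1 := by
  unfold psi
  norm_num [H652_zero, Real.one_rpow]

lemma psi_endpoint_eq (y : ℝ) (hy : y ∈ Icc (0:ℝ) 1) (hyc : y = 0 ∨ y = 1) :
    psi y = psi (1/2) := by
  have hne : (nhdsWithin y (Ioo 0 1)).NeBot := by
    rw [← mem_closure_iff_nhdsWithin_neBot, closure_Ioo (by norm_num : (0:ℝ) ≠ 1)]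
    exact hy
  have ht : Filter.Tendsto psi (nhdsWithin y (Ioo 0 1)) (nhds (psi y)) :=
    ((contOn_psi y hy).tendsto).mono_left (nhdsWithin_mono y Ioo_subset_Icc_self)
  have ht2 : Filter.Tendsto psi (nhdsWithin y (Ioo 0 1)) (nhds (psi (1/2))) := by
    apply Filter.Tendsto.congr' _ tendsto_const_nhds
    filter_upwards [self_mem_nhdsWithin] with x hx using (psi_const_on x hx).symm
  exact tendsto_nhds_unique ht ht2

lemma keyH : H652 1 = 3 * F26 1 := by
  rw [← psi_zero, ← psi_one,
    psi_endpoint_eq 0 (by norm_num) (Or.inl rfl),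
    psi_endpoint_eq 1 (by norm_num) (Or.inr rfl)]

lemma H652_strictmono (a b : ℝ) (ha : 0 ≤ a) (hab : a < b) (hb : b ≤ 1) :
    H652 a < H652 b := by
  have hsub : Set.uIcc a b ⊆ Set.uIcc (0:ℝ) 1 := by
    rw [uIcc_of_le hab.le, uIcc_of_le (by norm_num : (0:ℝ) ≤ 1)]
    exact Icc_subset_Icc ha hb
  have hint : IntervalIntegrable (fun t : ℝ => (1 - t^2) ^ (-(5/6):ℝ)) volume a b :=
    (integrable_aux 2 (by norm_num) (-(5/6)) (by norm_num) (by norm_num)).mono_set hsub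
  have hint0a : IntervalIntegrable (fun t : ℝ => (1 - t^2) ^ (-(5/6):ℝ)) volume 0 a :=
    (integrable_aux 2 (by norm_num) (-(5/6)) (by norm_num) (by norm_num)).mono_set
      (by rw [uIcc_of_le ha, uIcc_of_le (by norm_num : (0:ℝ) ≤ 1)]
          exact Icc_subset_Icc le_rfl (hab.le.trans hb))
  have hpos : 0 < ∫ t in a..b, (1 - t^2) ^ (-(5/6):ℝ) := by
    apply intervalIntegral.intervalIntegral_pos_of_pos_on hint _ hab
    intro x hx
    have h2 : 0 < 1 - x^2 := by nlinarith [hx.1, hx.2, ha]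
    positivity
  have hsplit : H652 b - H652 a = ∫ t in a..b, (1 - t^2) ^ (-(5/6):ℝ) := by
    unfold H652
    rw [intervalIntegral.integral_interval_sub_left (hint0a.trans hint) hint0a]
  linarith

/-- The identity `sin_{2,6}(2x/3) = 2 f(x)(1−f(x)²)^{1/6}/√(9−8f(x)²)` with
`f = sin_{6/5,2}`, expressed via the integrals. -/
theorem g_in_terms_of_f (s : ℝ) (hs : s ∈ Set.Icc (0:ℝ) 1) (h : 2 * H652 s ≤ H652 1) :
    F26 (2 * s * (1 - s ^ 2) ^ ((1:ℝ)/6) / Real.sqrt (9 - 8 * s ^ 2))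
      = (2/3) * H652 s := by
  show F26 (phi s) = (2/3) * H652 s
  have hHc : H652 1 = 2 * H652 creal := by
    have h1 := keyc
    have h2 := keyH
    linarith
  have hsc : s ≤ creal := by
    by_contra hc
    push_neg at hc
    have := H652_strictmono creal s creal_pos.le hc hs.2
    linarith
  rcases eq_or_lt_of_le hsc with heq | hlt
  · rw [heq, phi_creal]
    exact keyc
  · exact key1 s hs.1 (hlt.trans creal_lt_one) (Q_pos s hs.1 hlt)
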